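/- Identifiability of the asymmetric hub model: Let n_L < n and let (ρ, A) and (ρ̃, Ã) be parameters with ρ_i, ρ̃_i ∈ (0,1), Σρ_i = Σρ̃_i = 1, A_{ii} = Ã_{ii} = 1 for all hubs i, all off-diagonal entries in [0,1). Assume for all distinct hubs i, i' the follower rows (A_{i,n_L+1},...,A_{i,n}) and (A_{i',n_L+1},...,A_{i',n}) are not identical. If P(g | ρ, A) = P(g | ρ̃, Ã) for all g ∈ {0,1}^n, then (ρ, A) = (ρ̃, Ã). -/
import Mathlib


open Finset

open Finset

variable {n_L n : ℕ}

/-- follower columns -/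
def foll (n_L n : ℕ) : Finset (Fin n) := univ.filter (fun j => n_L ≤ (j : ℕ))

/-- follower-part of the product -/
noncomputable def Ff (B : Fin n_L → Fin n → ℝ) (i : Fin n_L) (S : Finset (Fin n)) : ℝ :=
  ∏ k ∈ foll n_L n, if k ∈ S then B i k else 1 - B i k

/-- hub-part of the product -/
noncomputable def Hh (hle : n_L ≤ n) (B : Fin n_L → Fin n → ℝ) (T : Finset (Fin n_L))
    (i : Fin n_L) : ℝ :=
  ∏ i', if i' ∈ T then B i (Fin.castLE hle i') else 1 - B i (Fin.castLE hle i')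

lemma hub_image (hle : n_L ≤ n) :
    (univ : Finset (Fin n)).filter (fun j : Fin n => (j : ℕ) < n_L)
      = (univ : Finset (Fin n_L)).image (Fin.castLE hle) := by
  ext j
  simp only [mem_filter, mem_univ, true_and, mem_image]
  constructor
  · intro hj
    exact ⟨⟨(j : ℕ), hj⟩, by ext; simp⟩
  · rintro ⟨a, rfl⟩
    simpa using a.isLt

lemma split_prod (hle : n_L ≤ n) (f : Fin n → ℝ) :
    ∏ j, f j = (∏ i : Fin n_L, f (Fin.castLE hle i)) * ∏ j ∈ foll n_L n, f j := by
  rw [← prod_filter_mul_prod_filter_not univ (fun j : Fin n => (j : ℕ) < n_L) f]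
  congr 1
  · rw [hub_image hle, prod_image]
    intro x _ y _ hxy
    exact Fin.castLE_injective hle hxy
  · apply prod_congr _ (fun _ _ => rfl)
    ext j
    simp [foll, not_lt]

lemma prod_decomp (hle : n_L ≤ n) (B : Fin n_L → Fin n → ℝ) (T : Finset (Fin n_L))
    (S : Finset (Fin n)) (hS : S ⊆ foll n_L n) (i : Fin n_L) :
    (∏ j, if (decide (j ∈ T.image (Fin.castLE hle) ∪ S)) = true then B i j else 1 - B i j)
      = Hh hle B T i * Ff B i S := by
  simp only [decide_eq_true_eq]
  rw [split_prod hle]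
  unfold Hh Ff
  congr 1
  · apply prod_congr rfl
    intro i' _
    have h1 : Fin.castLE hle i' ∈ T.image (Fin.castLE hle) ∪ S ↔ i' ∈ T := by
      simp only [mem_union, mem_image]
      constructor
      · rintro (⟨a, ha, hae⟩ | hs)
        · rwa [← Fin.castLE_injective hle hae]
        · have h3 : n_L ≤ ((Fin.castLE hle i' : Fin n) : ℕ) := by simpa [foll] using hS hs
          have h4 : ((Fin.castLE hle i' : Fin n) : ℕ) < n_L := by simpa using i'.isLt
          omega
      · intro hT; exact Or.inl ⟨i', hT, rfl⟩
    simp [h1]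
  · apply prod_congr rfl
    intro k hk
    have h2 : k ∈ T.image (Fin.castLE hle) ∪ S ↔ k ∈ S := by
      simp only [mem_union, mem_image]
      constructor
      · rintro (⟨a, ha, rfl⟩ | hs)
        · have h3 : n_L ≤ ((Fin.castLE hle a : Fin n) : ℕ) := by simpa [foll] using hk
          have h4 : ((Fin.castLE hle a : Fin n) : ℕ) < n_L := by simpa using a.isLt
          omega
        · exact hs
      · exact Or.inr
    simp [h2]

lemma H_zero (hle : n_L ≤ n) (B : Fin n_L → Fin n → ℝ)
    (hdiagB : ∀ i, B i (Fin.castLE hle i) = 1) (T : Finset (Fin n_L)) (i : Fin n_L)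
    (hi : i ∉ T) : Hh hle B T i = 0 := by
  apply prod_eq_zero (mem_univ i)
  rw [if_neg hi, hdiagB]
  ring

lemma H_single_pos (hle : n_L ≤ n) (B : Fin n_L → Fin n → ℝ)
    (hdiagB : ∀ i, B i (Fin.castLE hle i) = 1)
    (hoffB : ∀ (i : Fin n_L) (j : Fin n), (j : ℕ) ≠ (i : ℕ) → 0 ≤ B i j ∧ B i j < 1)
    (i : Fin n_L) : 0 < Hh hle B {i} i := by
  apply prod_pos
  intro i' _
  by_cases hi : i' = i
  · subst hi; simp [hdiagB]
  · rw [if_neg (by simp [hi])]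
    have hv : ((Fin.castLE hle i' : Fin n) : ℕ) ≠ (i : ℕ) := by
      simpa [Fin.ext_iff] using hi
    have := (hoffB i _ hv).2
    linarith

lemma F_empty_pos (hle : n_L ≤ n) (B : Fin n_L → Fin n → ℝ)
    (hoffB : ∀ (i : Fin n_L) (j : Fin n), (j : ℕ) ≠ (i : ℕ) → 0 ≤ B i j ∧ B i j < 1)
    (i : Fin n_L) : 0 < Ff B i ∅ := by
  apply prod_pos
  intro k hk
  rw [if_neg (by simp)]
  have hk' : n_L ≤ (k : ℕ) := by simpa [foll] using hk
  have hv : (k : ℕ) ≠ (i : ℕ) := by have := i.isLt; omega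
  have := (hoffB i k hv).2
  linarith

lemma F_single (B : Fin n_L → Fin n → ℝ) (i : Fin n_L) (k : Fin n) (hk : k ∈ foll n_L n) :
    Ff B i {k} * (1 - B i k) = B i k * Ff B i ∅ := by
  unfold Ff
  rw [← Finset.mul_prod_erase _ _ hk, ← Finset.mul_prod_erase _ (fun k' => if k' ∈ (∅ : Finset (Fin n)) then B i k' else 1 - B i k') hk]
  have hE : (∏ x ∈ (foll n_L n).erase k, if x ∈ ({k} : Finset (Fin n)) then B i x else 1 - B i x)
      = ∏ x ∈ (foll n_L n).erase k, (if x ∈ (∅ : Finset (Fin n)) then B i x else 1 - B i x) := by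
    refine prod_congr rfl fun x hx => ?_
    rw [if_neg (by simp [(mem_erase.mp hx).1]), if_neg (by simp)]
  rw [hE, if_pos (by simp), if_neg (by simp)]
  ring

lemma H_pair (hle : n_L ≤ n) (B : Fin n_L → Fin n → ℝ) (i i' : Fin n_L) (hne : i' ≠ i) :
    Hh hle B {i, i'} i * (1 - B i (Fin.castLE hle i'))
      = B i (Fin.castLE hle i') * Hh hle B {i} i := by
  unfold Hh
  rw [← Finset.mul_prod_erase _ _ (mem_univ i'),
    ← Finset.mul_prod_erase _ (fun x => if x ∈ ({i} : Finset (Fin n_L)) then B i (Fin.castLE hle x) else 1 - B i (Fin.castLE hle x)) (mem_univ i')]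
  have hE : (∏ x ∈ univ.erase i', if x ∈ ({i, i'} : Finset (Fin n_L)) then B i (Fin.castLE hle x) else 1 - B i (Fin.castLE hle x))
      = ∏ x ∈ univ.erase i', (if x ∈ ({i} : Finset (Fin n_L)) then B i (Fin.castLE hle x) else 1 - B i (Fin.castLE hle x)) := by
    refine prod_congr rfl fun x hx => ?_
    have hx' := (mem_erase.mp hx).1
    by_cases hxi : x = i
    · rw [if_pos (by simp [hxi]), if_pos (by simp [hxi])]
    · rw [if_neg (by simp [hxi, hx']), if_neg (by simp [hxi])]
  rw [hE, if_pos (by simp), if_neg (by simp [hne])]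
  ring

lemma Ff_split (B : Fin n_L → Fin n → ℝ) (i : Fin n_L) (S : Finset (Fin n))
    (hS : S ⊆ foll n_L n) :
    Ff B i S = (∏ k ∈ S, B i k) * ∏ k ∈ foll n_L n \ S, (1 - B i k) := by
  unfold Ff
  rw [prod_ite, Finset.filter_mem_eq_inter, (Finset.inter_eq_right).mpr hS]
  congr 1
  rw [Finset.sdiff_eq_filter]

lemma sum_Ff (B : Fin n_L → Fin n → ℝ) (i : Fin n_L) :
    ∑ S ∈ (foll n_L n).powerset, Ff B i S = 1 := by
  rw [Finset.sum_congr rfl (fun S hS => Ff_split B i S (mem_powerset.mp hS)),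
    ← Finset.prod_add]
  simp


/-- Identifiability of the asymmetric hub model (Theorem 1): under the conditions
that diagonal entries equal 1, off-diagonal entries lie in `[0,1)`, and any two
hub rows differ on some follower column, two parameterizations inducing the same
distribution on `{0,1}ⁿ` must coincide. -/
theorem stmt_9 (n_L n : ℕ) (h : n_L < n)
    (ρ ρ' : Fin n_L → ℝ) (A A' : Fin n_L → Fin n → ℝ)
    (hρpos : ∀ i, 0 < ρ i ∧ ρ i < 1) (hρ'pos : ∀ i, 0 < ρ' i ∧ ρ' i < 1)
    (hρsum : ∑ i, ρ i = 1) (hρ'sum : ∑ i, ρ' i = 1)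
    (hdiag : ∀ i : Fin n_L, A i (Fin.castLE h.le i) = 1)
    (hdiag' : ∀ i : Fin n_L, A' i (Fin.castLE h.le i) = 1)
    (hoff : ∀ (i : Fin n_L) (j : Fin n), (j : ℕ) ≠ (i : ℕ) →
      0 ≤ A i j ∧ A i j < 1)
    (hoff' : ∀ (i : Fin n_L) (j : Fin n), (j : ℕ) ≠ (i : ℕ) →
      0 ≤ A' i j ∧ A' i j < 1)
    (hdist : ∀ i i' : Fin n_L, i ≠ i' →
      ∃ k : Fin n, n_L ≤ (k : ℕ) ∧ A i k ≠ A i' k)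
    (heq : ∀ g : Fin n → Bool,
      (∑ i, ρ i * ∏ j, (if g j then A i j else 1 - A i j)) =
      (∑ i, ρ' i * ∏ j, (if g j then A' i j else 1 - A' i j))) :
    ρ = ρ' ∧ A = A' := by
  -- master equation
  have heq2 : ∀ (T : Finset (Fin n_L)) (S : Finset (Fin n)), S ⊆ foll n_L n →
      ∑ i, ρ i * (Hh h.le A T i * Ff A i S) = ∑ i, ρ' i * (Hh h.le A' T i * Ff A' i S) := by
    intro T S hS
    have h0 := heq (fun j => decide (j ∈ T.image (Fin.castLE h.le) ∪ S))
    simpa only [prod_decomp h.le A T S hS, prod_decomp h.le A' T S hS] using h0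
  -- single-hub equations
  have single : ∀ (i : Fin n_L) (S : Finset (Fin n)), S ⊆ foll n_L n →
      ρ i * (Hh h.le A {i} i * Ff A i S) = ρ' i * (Hh h.le A' {i} i * Ff A' i S) := by
    intro i S hS
    have h0 := heq2 {i} S hS
    have hz1 : (∑ x : Fin n_L, ρ x * (Hh h.le A {i} x * Ff A x S))
        = ρ i * (Hh h.le A {i} i * Ff A i S) := by
      apply Finset.sum_eq_single
      · intro b _ hb
        rw [H_zero h.le A hdiag _ b (by simp [hb])]; ring
      · intro hi; exact absurd (mem_univ i) hi
    have hz2 : (∑ x : Fin n_L, ρ' x * (Hh h.le A' {i} x * Ff A' x S))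
        = ρ' i * (Hh h.le A' {i} i * Ff A' i S) := by
      apply Finset.sum_eq_single
      · intro b _ hb
        rw [H_zero h.le A' hdiag' _ b (by simp [hb])]; ring
      · intro hi; exact absurd (mem_univ i) hi
    rw [hz1, hz2] at h0
    exact h0
  -- follower entries coincide
  have hfoll : ∀ (i : Fin n_L) (k : Fin n), k ∈ foll n_L n → A i k = A' i k := by
    intro i k hk
    have e0 := single i ∅ (empty_subset _)
    have e1 := single i {k} (by rwa [singleton_subset_iff])
    have r := F_single A i k hk
    have r' := F_single A' i k hk
    have hXpos : 0 < ρ i * (Hh h.le A {i} i * Ff A i ∅) :=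
      mul_pos (hρpos i).1 (mul_pos (H_single_pos h.le A hdiag hoff i)
        (F_empty_pos h.le A hoff i))
    have h2 : A i k * (1 - A' i k) * (ρ i * (Hh h.le A {i} i * Ff A i ∅))
        = A' i k * (1 - A i k) * (ρ' i * (Hh h.le A' {i} i * Ff A' i ∅)) := by
      linear_combination (1 - A i k) * (1 - A' i k) * e1
        - (1 - A' i k) * ρ i * Hh h.le A {i} i * r
        + (1 - A i k) * ρ' i * Hh h.le A' {i} i * r'
    rw [← e0] at h2
    have h3 := mul_right_cancel₀ hXpos.ne' h2
    linear_combination h3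
  have hFf : ∀ (i : Fin n_L) (S : Finset (Fin n)), S ⊆ foll n_L n →
      Ff A i S = Ff A' i S := by
    intro i S hS
    exact prod_congr rfl fun k hk => by rw [hfoll i k hk]
  -- mixing weights times hub-row products coincide
  have hQ : ∀ i, ρ i * Hh h.le A {i} i = ρ' i * Hh h.le A' {i} i := by
    intro i
    have e0 := single i ∅ (empty_subset _)
    rw [← hFf i ∅ (empty_subset _), ← mul_assoc, ← mul_assoc] at e0
    exact mul_right_cancel₀ (F_empty_pos h.le A hoff i).ne' e0
  -- hub off-diagonal entries coincide
  have hhub : ∀ i i' : Fin n_L, i ≠ i' →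
      A i (Fin.castLE h.le i') = A' i (Fin.castLE h.le i') := by
    intro i i' hne
    have pair : ∀ S, S ⊆ foll n_L n →
        ρ i * (Hh h.le A {i, i'} i * Ff A i S) + ρ i' * (Hh h.le A {i, i'} i' * Ff A i' S)
        = ρ' i * (Hh h.le A' {i, i'} i * Ff A i S)
          + ρ' i' * (Hh h.le A' {i, i'} i' * Ff A i' S) := by
      intro S hS
      have h0 := heq2 {i, i'} S hS
      have hz1 : ∀ x ∈ (univ : Finset (Fin n_L)), x ∉ ({i, i'} : Finset (Fin n_L)) →
          ρ x * (Hh h.le A {i, i'} x * Ff A x S) = 0 := by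
        intro x _ hx
        rw [H_zero h.le A hdiag _ x hx]; ring
      have hz2 : ∀ x ∈ (univ : Finset (Fin n_L)), x ∉ ({i, i'} : Finset (Fin n_L)) →
          ρ' x * (Hh h.le A' {i, i'} x * Ff A' x S) = 0 := by
        intro x _ hx
        rw [H_zero h.le A' hdiag' _ x hx]; ring
      rw [← Finset.sum_subset (subset_univ _) hz1, ← Finset.sum_subset (subset_univ _) hz2,
        Finset.sum_pair hne, Finset.sum_pair hne,
        ← hFf i S hS, ← hFf i' S hS] at h0
      exact h0
    have hdsum : ρ i * Hh h.le A {i, i'} i + ρ i' * Hh h.le A {i, i'} i'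
        = ρ' i * Hh h.le A' {i, i'} i + ρ' i' * Hh h.le A' {i, i'} i' := by
      have h0 := Finset.sum_congr rfl (fun S hS => pair S (mem_powerset.mp hS))
      rw [Finset.sum_add_distrib, Finset.sum_add_distrib] at h0
      simp only [← mul_assoc] at h0
      rw [← Finset.mul_sum, ← Finset.mul_sum, ← Finset.mul_sum, ← Finset.mul_sum,
        sum_Ff, sum_Ff, mul_one, mul_one, mul_one, mul_one] at h0
      exact h0
    have ha : ρ i * Hh h.le A {i, i'} i = ρ' i * Hh h.le A' {i, i'} i := by
      by_contra hd
      have hF_eq : ∀ S, S ⊆ foll n_L n → Ff A i S = Ff A i' S := by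
        intro S hS
        have hp := pair S hS
        have hkey : (ρ i * Hh h.le A {i, i'} i - ρ' i * Hh h.le A' {i, i'} i) * Ff A i S
            = (ρ i * Hh h.le A {i, i'} i - ρ' i * Hh h.le A' {i, i'} i) * Ff A i' S := by
          linear_combination hp - Ff A i' S * hdsum
        exact mul_left_cancel₀ (sub_ne_zero.mpr hd) hkey
      obtain ⟨k, hk1, hk2⟩ := hdist i i' hne
      have hkf : k ∈ foll n_L n := by simp [foll, hk1]
      have r := F_single A i k hkf
      have r2 := F_single A i' k hkf
      have h0 := hF_eq ∅ (empty_subset _)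
      have hks := hF_eq {k} (by rwa [singleton_subset_iff])
      have hF0 : 0 < Ff A i ∅ := F_empty_pos h.le A hoff i
      have hcl : A i k * (1 - A i' k) * Ff A i ∅ = A i' k * (1 - A i k) * Ff A i ∅ := by
        linear_combination -(1 - A i' k) * r + (1 - A i k) * r2
          + (1 - A i k) * (1 - A i' k) * hks - A i' k * (1 - A i k) * h0
      have h3 := mul_right_cancel₀ hF0.ne' hcl
      exact hk2 (by linear_combination h3)
    have hp := H_pair h.le A i i' (Ne.symm hne)
    have hp' := H_pair h.le A' i i' (Ne.symm hne)
    have hQi := hQ i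
    have hYpos : 0 < ρ i * Hh h.le A {i} i :=
      mul_pos (hρpos i).1 (H_single_pos h.le A hdiag hoff i)
    have key : A i (Fin.castLE h.le i') * (1 - A' i (Fin.castLE h.le i'))
          * (ρ i * Hh h.le A {i} i)
        = A' i (Fin.castLE h.le i') * (1 - A i (Fin.castLE h.le i'))
          * (ρ i * Hh h.le A {i} i) := by
      linear_combination -ρ i * (1 - A' i (Fin.castLE h.le i')) * hp
        + (1 - A i (Fin.castLE h.le i')) * (1 - A' i (Fin.castLE h.le i')) * ha
        + ρ' i * (1 - A i (Fin.castLE h.le i')) * hp'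
        - A' i (Fin.castLE h.le i') * (1 - A i (Fin.castLE h.le i')) * hQi
    have h3 := mul_right_cancel₀ hYpos.ne' key
    linear_combination h3
  have hA : A = A' := by
    funext i j
    rcases lt_or_ge (j : ℕ) n_L with hj | hj
    · have hji : j = Fin.castLE h.le ⟨(j : ℕ), hj⟩ := by simp [Fin.ext_iff]
      by_cases hii : (⟨(j : ℕ), hj⟩ : Fin n_L) = i
      · rw [hji, hii, hdiag i, hdiag' i]
      · rw [hji]
        exact hhub i _ (fun e => hii e.symm)
    · exact hfoll i j (by simp [foll, hj])
  refine ⟨?_, hA⟩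
  funext i
  have hQi := hQ i
  rw [← hA] at hQi
  exact mul_right_cancel₀ (H_single_pos h.le A hdiag hoff i).ne' hQi
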